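/- arXiv:2401.12096 — 3 statements merged into one kernel-verified Lean document; each statement's English description precedes it below -/
import Mathlib

section
/- Let V be a finite-dimensional real vector space, ω : V × V → ℝ an alternating bilinear form with kernel K = {v ∈ V : ω(v, w) = 0 for all w ∈ V}, let W be a linear complement of K in V, and let P : V → V be the projection onto K along W. Then the alternating bilinear form ω̃ on V × K* defined by ω̃((v, μ), (v', μ')) = ω(v, v') + μ'(P v) − μ(P v') is nondegenerate, i.e. (V × K*, ω̃) is a symplectic vector space. -/
/-- Let `V` be a finite-dimensional real vector space, `ω` an alternating
bilinear form on `V` with kernel `K`, `W` a linear complement of `K`, and `P : V → V` the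
projection onto `K` along `W`.  Then the alternating bilinear form `ω̃` on `V × K*` given by
`ω̃((v,μ),(v',μ')) = ω(v,v') + μ'(P v) − μ(P v')` is nondegenerate, i.e. `(V × K*, ω̃)` is a
symplectic vector space. -/
theorem statement1 (V : Type*) [AddCommGroup V] [Module ℝ V] [FiniteDimensional ℝ V]
    (ω : V →ₗ[ℝ] V →ₗ[ℝ] ℝ) (halt : ∀ v : V, ω v v = 0)
    (K W : Submodule ℝ V)
    (hK : ∀ v : V, v ∈ K ↔ ∀ w : V, ω v w = 0)
    (hcompl : IsCompl K W)
    (P : V →ₗ[ℝ] V)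
    (hPmem : ∀ v : V, P v ∈ K)
    (hProj : P ∘ₗ P = P)
    (hPrange : LinearMap.range P = K)
    (hPker : LinearMap.ker P = W) :
    ∀ (v : V) (μ : Module.Dual ℝ ↥K),
      (∀ (v' : V) (μ' : Module.Dual ℝ ↥K),
          ω v v' + μ' ⟨P v, hPmem v⟩ - μ ⟨P v', hPmem v'⟩ = 0) →
      v = 0 ∧ μ = 0 := by
  intro v μ h
  have hskew : ∀ a b : V, ω a b = - ω b a := by
    intro a b
    have h1 := halt (a + b)
    simp [map_add, halt a, halt b] at h1
    linarith
  -- P fixes K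
  have hPfix : ∀ k ∈ K, P k = k := by
    intro k hk
    rw [← hPrange] at hk
    obtain ⟨x, rfl⟩ := hk
    have := congrFun (congrArg (fun f => f.toFun) hProj) x
    simpa using this
  -- P v = 0
  have hPv : P v = 0 := by
    have h0 : ∀ μ' : Module.Dual ℝ ↥K, μ' ⟨P v, hPmem v⟩ = 0 := by
      intro μ'
      have := h 0 μ'
      rw [show (⟨P 0, hPmem 0⟩ : K) = 0 by ext; simp] at this
      simpa using this
    have hz : (⟨P v, hPmem v⟩ : K) = 0 :=
      (Module.forall_dual_apply_eq_zero_iff ℝ _).mp h0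
    exact congrArg Subtype.val hz
  -- ω v v' = μ (P v')
  have hω : ∀ v' : V, ω v v' = μ ⟨P v', hPmem v'⟩ := by
    intro v'
    have := h v' 0
    simp at this
    linarith
  -- ω v = 0 on all of V
  have hωz : ∀ w : V, ω v w = 0 := by
    intro w
    obtain ⟨k, w', hk, hw', rfl⟩ :=
      Submodule.codisjoint_iff_exists_add_eq.mp hcompl.codisjoint w
    have h1 : ω v k = 0 := by
      have := (hK k).mp hk v
      rw [hskew v k, this, neg_zero]
    have h2 : ω v w' = 0 := by
      have hPw' : P w' = 0 := by
        rw [← LinearMap.mem_ker, hPker]; exact hw'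
      have := hω w'
      have hz : (⟨P w', hPmem w'⟩ : K) = 0 := by ext; simp [hPw']
      rw [hz] at this
      simpa using this
    simp [h1, h2]
  have hvK : v ∈ K := (hK v).mpr hωz
  have hvW : v ∈ W := by rw [← hPker] at *; exact hPv
  have hv0 : v = 0 := Submodule.disjoint_def.mp hcompl.disjoint v hvK hvW
  refine ⟨hv0, ?_⟩
  ext ⟨k, hk⟩
  have := hω k
  rw [hv0] at this
  simp at this
  have hfix : (⟨P k, hPmem k⟩ : K) = ⟨k, hk⟩ := by
    ext; simp [hPfix k hk]
  rw [hfix] at this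
  simp [← this]
end

section
/- Let V be a real Banach space, ω : V × V → ℝ a continuous alternating bilinear form with kernel K = {v ∈ V : ω(v, w) = 0 for all w ∈ V}, assume K is complemented in V with complement W, and let P : V → V be the continuous projection onto K along W. Then the continuous alternating bilinear form ω̃ on V × K* (K* the continuous dual of K) defined by ω̃((v, μ), (v', μ')) = ω(v, v') + μ'(P v) − μ(P v') is weakly nondegenerate: if ω̃((v, μ), (v', μ')) = 0 for all (v', μ') ∈ V × K*, then (v, μ) = (0, 0). -/
/-- Let `V` be a real Banach space, `ω` a continuous alternating bilinear form
on `V` with kernel `K`, assume `K` is (topologically) complemented in `V` with closed complement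
`W`, and let `P : V → V` be the continuous projection onto `K` along `W`.  Then the continuous
alternating bilinear form `ω̃` on `V × K*` (with `K*` the continuous dual of `K`) given by
`ω̃((v,μ),(v',μ')) = ω(v,v') + μ'(P v) − μ(P v')` is weakly nondegenerate: if
`ω̃((v,μ),(v',μ')) = 0` for all `(v',μ')`, then `(v,μ) = (0,0)`. -/
theorem statement2 (V : Type*) [NormedAddCommGroup V] [NormedSpace ℝ V] [CompleteSpace V]
    (ω : V →L[ℝ] V →L[ℝ] ℝ) (halt : ∀ v : V, ω v v = 0)
    (K W : Submodule ℝ V)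
    (hKclosed : IsClosed (K : Set V)) (hWclosed : IsClosed (W : Set V))
    (hK : ∀ v : V, v ∈ K ↔ ∀ w : V, ω v w = 0)
    (hcompl : IsCompl K W)
    (P : V →L[ℝ] V)
    (hPmem : ∀ v : V, P v ∈ K)
    (hProj : ∀ v : V, P (P v) = P v)
    (hPrange : LinearMap.range (P : V →ₗ[ℝ] V) = K)
    (hPker : LinearMap.ker (P : V →ₗ[ℝ] V) = W) :
    ∀ (v : V) (μ : ↥K →L[ℝ] ℝ),
      (∀ (v' : V) (μ' : ↥K →L[ℝ] ℝ),
          ω v v' + μ' ⟨P v, hPmem v⟩ - μ ⟨P v', hPmem v'⟩ = 0) →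
      v = 0 ∧ μ = 0 := by
  intro v μ h
  -- skew-symmetry
  have hskew : ∀ a b : V, ω a b = - ω b a := by
    intro a b
    have := halt (a + b)
    simp [map_add, halt a, halt b] at this
    linarith
  -- P 0 = 0 as an element of K
  have hP0 : (⟨P 0, hPmem 0⟩ : K) = 0 := by
    ext; simp
  -- Step 1: μ' (P v) = 0 for all μ', hence P v = 0
  have hz0 : ∀ hh : (0:V) ∈ K, (⟨0, hh⟩ : K) = 0 := fun _ => rfl
  have h1 : ∀ μ' : ↥K →L[ℝ] ℝ, μ' ⟨P v, hPmem v⟩ = 0 := by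
    intro μ'
    have := h 0 μ'
    simp [hz0] at this
    linarith [this]
  have hPv : P v = 0 := by
    have : (⟨P v, hPmem v⟩ : K) = 0 :=
      NormedSpace.eq_zero_of_forall_dual_eq_zero ℝ (fun μ' => h1 μ')
    exact congrArg Subtype.val this
  -- Step 2: ω v v' = μ (P v')
  have h2 : ∀ v' : V, ω v v' = μ ⟨P v', hPmem v'⟩ := by
    intro v'
    have := h v' 0
    simp at this
    linarith
  -- v ∈ W since P v = 0
  have hvW : v ∈ W := by
    rw [← hPker]; exact hPv
  -- ω v v' = 0 for v' ∈ W and v' ∈ K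
  have hωW : ∀ v' ∈ W, ω v v' = 0 := by
    intro v' hv'
    have hPv' : P v' = 0 := by rw [← hPker] at hv'; exact hv'
    have := h2 v'
    have hzz : (⟨P v', hPmem v'⟩ : K) = 0 := by ext; simp [hPv']
    rw [hzz] at this
    simpa using this
  have hωK : ∀ v' ∈ K, ω v v' = 0 := by
    intro v' hv'
    have := (hK v').1 hv' v
    rw [hskew]
    simp [this]
  -- hence v ∈ K
  have hvK : v ∈ K := by
    rw [hK]
    intro w
    obtain ⟨k, w', hk, hw', rfl⟩ := Submodule.codisjoint_iff_exists_add_eq.mp hcompl.codisjoint w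
    simp [map_add, hωK k hk, hωW w' hw']
  have hv0 : v = 0 := by
    have := hcompl.disjoint
    exact (Submodule.disjoint_def.mp this) v hvK hvW
  refine ⟨hv0, ?_⟩
  ext ⟨k, hk⟩
  obtain ⟨x, hx⟩ := hPrange ▸ hk
  have := h2 x
  rw [hv0] at this
  simp at this
  have : μ ⟨P x, hPmem x⟩ = 0 := by linarith [this]
  simpa [show P x = k from hx] using this
end

section
/- Let V be a finite-dimensional real vector space, ω an alternating bilinear form on V with kernel K, W a complement of K, P the projection onto K along W, and let ω̃ be the form on V × K* given by ω̃((v, μ), (v', μ')) = ω(v, v') + μ'(P v) − μ(P v'). Then the ω̃-orthogonal complement of the subspace V × {0} inside V × K* equals K × {0}; in particular it is contained in V × {0}, so V × {0} is a coisotropic subspace of the symplectic vector space (V × K*, ω̃). -/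
/-- The symplectic thickening form `ω̃` on `V × K*`:
`ω̃((v,μ),(v',μ')) = ω(v,v') + μ'(P v) − μ(P v')`. -/
noncomputable def omegaThick {V : Type*} [AddCommGroup V] [Module ℝ V]
    (ω : V →ₗ[ℝ] V →ₗ[ℝ] ℝ) (K : Submodule ℝ V)
    (P : V →ₗ[ℝ] V) (hPmem : ∀ v : V, P v ∈ K)
    (z w : V × Module.Dual ℝ ↥K) : ℝ :=
  ω z.1 w.1 + w.2 ⟨P z.1, hPmem z.1⟩ - z.2 ⟨P w.1, hPmem w.1⟩

/-- Let `V` be a finite-dimensional real vector space, `ω` an alternating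
bilinear form with kernel `K`, `W` a complement of `K`, `P` the projection onto `K` along `W`,
and `ω̃` the thickening form on `V × K*`.  Then the `ω̃`-orthogonal complement of the subspace
`V × {0}` inside `V × K*` equals `K × {0}`; in particular it is contained in `V × {0}`, so
`V × {0}` is a coisotropic subspace of the symplectic vector space `(V × K*, ω̃)`. -/
theorem statement3 (V : Type*) [AddCommGroup V] [Module ℝ V] [FiniteDimensional ℝ V]
    (ω : V →ₗ[ℝ] V →ₗ[ℝ] ℝ) (halt : ∀ v : V, ω v v = 0)
    (K W : Submodule ℝ V)
    (hK : ∀ v : V, v ∈ K ↔ ∀ w : V, ω v w = 0)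
    (hcompl : IsCompl K W)
    (P : V →ₗ[ℝ] V)
    (hPmem : ∀ v : V, P v ∈ K)
    (hProj : P ∘ₗ P = P)
    (hPrange : LinearMap.range P = K)
    (hPker : LinearMap.ker P = W) :
    {z : V × Module.Dual ℝ ↥K |
        ∀ v' : V, omegaThick ω K P hPmem z (v', 0) = 0}
      = {z : V × Module.Dual ℝ ↥K | z.1 ∈ K ∧ z.2 = 0} ∧
    {z : V × Module.Dual ℝ ↥K |
        ∀ v' : V, omegaThick ω K P hPmem z (v', 0) = 0}
      ⊆ {z : V × Module.Dual ℝ ↥K | z.2 = 0} := by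
  -- P fixes K
  have hPfix : ∀ k ∈ K, P k = k := by
    intro k hk
    obtain ⟨u, hu⟩ := hPrange ▸ hk
    have := congrArg (fun f => f u) hProj
    simp only [LinearMap.comp_apply] at this
    rw [← hu, this, hu]
  -- antisymmetry
  have hskew : ∀ x y : V, ω x y = -ω y x := by
    intro x y
    have := halt (x + y)
    simp only [map_add, LinearMap.add_apply, halt x, halt y] at this
    linarith
  have key : {z : V × Module.Dual ℝ ↥K |
        ∀ v' : V, omegaThick ω K P hPmem z (v', 0) = 0}
      = {z : V × Module.Dual ℝ ↥K | z.1 ∈ K ∧ z.2 = 0} := by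
    ext z
    simp only [Set.mem_setOf_eq, omegaThick, LinearMap.zero_apply, add_zero]
    constructor
    · intro h
      -- z.2 vanishes on K
      have hz2 : z.2 = 0 := by
        apply LinearMap.ext
        rintro ⟨k, hk⟩
        have hωk : ω z.1 k = 0 := by
          rw [hskew, (hK k).mp hk z.1, neg_zero]
        have := h k
        have hPk : P k = k := hPfix k hk
        simp only [hPk] at this
        have : z.2 ⟨k, hk⟩ = ω z.1 k := by linarith
        simp [this, hωk]
      have hz1 : z.1 ∈ K := by
        rw [hK]
        intro w
        have := h w
        rw [hz2] at this
        simpa using this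
      exact ⟨hz1, hz2⟩
    · rintro ⟨h1, h2⟩ v'
      rw [h2, (hK z.1).mp h1 v']
      simp
  refine ⟨key, ?_⟩
  rw [key]
  intro z hz
  exact hz.2
end
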